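/- Let V be a finite-dimensional vector space over the field with two elements with dim V = k+1 ≥ 3, let X be the set of nonzero vectors of V (so |X| = n = 2^{k+1} − 1), and let S be the Steiner triple system on X whose blocks are the 3-sets {a, b, a+b} for distinct nonzero a, b (the projective geometry PG(k,2)). Then β(S) = (1/3)·C(n,2); that is, B(S) = S. -/

import Mathlib

/-- A Steiner quasigroup structure on `X`. -/
def IsSteinerQuasigroup {X : Type*} (star : X → X → X) : Prop :=
  (∀ a, star a a = a) ∧ (∀ a b, star a b = star b a) ∧
    (∀ a b, star a (star a b) = b)

/-- The blocks of the Steiner triple system associated to a Steiner quasigroup: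
the 3-element subsets `{a,b,c}` with `a,b,c` distinct and `a ⋆ b = c`. -/
def blocksOf {X : Type*} [DecidableEq X] (star : X → X → X) : Set (Finset X) :=
  {B | ∃ a b c : X, a ≠ b ∧ a ≠ c ∧ b ≠ c ∧ B = {a, b, c} ∧ star a b = c}

/-- `A(S) = {{a⋆b, b⋆c, c⋆a} : a,b,c pairwise distinct, {a,b,c} ∉ S}`. -/
def ASet {X : Type*} [DecidableEq X] (star : X → X → X) : Set (Finset X) :=
  {B | ∃ a b c : X, a ≠ b ∧ a ≠ c ∧ b ≠ c ∧
    ({a, b, c} : Finset X) ∉ blocksOf star ∧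
    B = {star a b, star b c, star c a}}

/-- `B(S) = {{a⋆b, b⋆c, c⋆a} : a,b,c pairwise distinct}`. -/
def BSet {X : Type*} [DecidableEq X] (star : X → X → X) : Set (Finset X) :=
  {B | ∃ a b c : X, a ≠ b ∧ a ≠ c ∧ b ≠ c ∧
    B = {star a b, star b c, star c a}}

/-- `α(S) = |A(S)|`. -/
noncomputable def alphaInv {X : Type*} [DecidableEq X] (star : X → X → X) : ℕ :=
  (ASet star).ncard

/-- `β(S) = |B(S)|`. -/
noncomputable def betaInv {X : Type*} [DecidableEq X] (star : X → X → X) : ℕ :=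
  (BSet star).ncard

/-- A pasch configuration: four blocks `{a,b,c}, {a,d,e}, {f,b,d}, {f,c,e}`
with `a,b,c,d,e,f` pairwise distinct. -/
def IsPasch {X : Type*} [DecidableEq X] (P : Set (Finset X)) : Prop :=
  ∃ a b c d e f : X, ([a, b, c, d, e, f] : List X).Pairwise (· ≠ ·) ∧
    P = {({a, b, c} : Finset X), {a, d, e}, {f, b, d}, {f, c, e}}

/-- A Steiner triple system is anti-pasch if it contains no pasch configuration. -/
def IsAntiPasch {X : Type*} [DecidableEq X] (star : X → X → X) : Prop :=
  ∀ P : Set (Finset X), IsPasch P → ¬ P ⊆ blocksOf star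


/-- The Steiner quasigroup of the projective geometry `PG(k,2)`:
on nonzero vectors of a vector space over `F₂`, `a ⋆ b = a + b` for `a ≠ b`. -/
noncomputable def projStar {V : Type*} [AddCommGroup V] [Module (ZMod 2) V]
    [DecidableEq V] (a b : {v : V // v ≠ 0}) : {v : V // v ≠ 0} :=
  if h : a = b then a
  else
    ⟨a.1 + b.1, by
      intro h0
      apply h
      apply Subtype.ext
      have hb : (b : V) + (b : V) = 0 := by
        have h2 : (2 : ZMod 2) • (b : V) = (b : V) + (b : V) := two_smul _ _
        rw [show (2 : ZMod 2) = 0 by decide, zero_smul] at h2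
        exact h2.symm
      have ha' : (a : V) = -(b : V) := eq_neg_of_add_eq_zero_left h0
      have hnb : -(b : V) = (b : V) := neg_eq_of_add_eq_zero_left hb
      rw [ha', hnb]⟩

section Aux

set_option linter.unusedSectionVars false

variable {V : Type*} [AddCommGroup V] [Module (ZMod 2) V] [DecidableEq V]

lemma pg_addself (v : V) : v + v = 0 := by
  have h2 : (2 : ZMod 2) • v = v + v := two_smul _ _
  rw [show (2 : ZMod 2) = 0 by decide, zero_smul] at h2
  exact h2.symm

local notation "X" => {v : V // v ≠ 0}

lemma projStar_val {a b : X} (h : a ≠ b) : (projStar a b).1 = a.1 + b.1 := by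
  rw [projStar, dif_neg h]

lemma projStar_ne_left {a b : X} (h : a ≠ b) : projStar a b ≠ a := by
  intro he
  have h1 := congrArg Subtype.val he
  rw [projStar_val h] at h1
  exact b.2 (by rwa [add_eq_left] at h1)

lemma projStar_ne_right {a b : X} (h : a ≠ b) : projStar a b ≠ b := by
  intro he
  have h1 := congrArg Subtype.val he
  rw [projStar_val h] at h1
  exact a.2 (by rwa [add_eq_right] at h1)

lemma projStar_comm (a b : X) : projStar a b = projStar b a := by
  rcases eq_or_ne a b with rfl | h
  · rfl
  · apply Subtype.ext
    rw [projStar_val h, projStar_val h.symm, add_comm]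

lemma projStar_cancel (a b : X) : projStar a (projStar a b) = b := by
  rcases eq_or_ne a b with rfl | h
  · have haa : projStar a a = a := by rw [projStar, dif_pos rfl]
    rw [haa, haa]
  · apply Subtype.ext
    rw [projStar_val (Ne.symm (projStar_ne_left h)), projStar_val h, ← add_assoc,
      pg_addself, zero_add]

/-- the sum of distinct elements, as a subtype element -/
lemma projStar_eq_iff {a b c : X} (h : a ≠ b) :
    projStar a b = c ↔ a.1 + b.1 = c.1 := by
  constructor
  · intro he; rw [← he, projStar_val h]
  · intro he; exact Subtype.ext (by rw [projStar_val h, he])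

lemma mem_blocks_iff {t : Finset X} :
    t ∈ blocksOf (projStar (V := V)) ↔ ∃ a b : X, a ≠ b ∧ t = {a, b, projStar a b} := by
  constructor
  · rintro ⟨a, b, c, hab, -, -, rfl, rfl⟩
    exact ⟨a, b, hab, rfl⟩
  · rintro ⟨a, b, hab, rfl⟩
    exact ⟨a, b, projStar a b, hab, Ne.symm (projStar_ne_left hab),
      Ne.symm (projStar_ne_right hab), rfl, rfl⟩

lemma block_card {t : Finset X} (ht : t ∈ blocksOf (projStar (V := V))) : t.card = 3 := by
  obtain ⟨a, b, hab, rfl⟩ := mem_blocks_iff.mp ht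
  rw [Finset.card_insert_of_notMem (by
      simp only [Finset.mem_insert, Finset.mem_singleton]
      push_neg
      exact ⟨hab, Ne.symm (projStar_ne_left hab)⟩),
    Finset.card_insert_of_notMem (by
      simp only [Finset.mem_singleton]
      exact Ne.symm (projStar_ne_right hab)),
    Finset.card_singleton]

lemma block_unique {t : Finset X} (ht : t ∈ blocksOf (projStar (V := V)))
    {a b : X} (hab : a ≠ b) (ha : a ∈ t) (hb : b ∈ t) :
    t = {a, b, projStar a b} := by
  obtain ⟨x, y, hxy, rfl⟩ := mem_blocks_iff.mp ht
  have hxz : x ≠ projStar x y := Ne.symm (projStar_ne_left hxy)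
  have hyz : y ≠ projStar x y := Ne.symm (projStar_ne_right hxy)
  have e1 : projStar y x = projStar x y := projStar_comm y x
  have e2 : projStar x (projStar x y) = y := projStar_cancel x y
  have e3 : projStar (projStar x y) x = y := by rw [projStar_comm]; exact e2
  have e4 : projStar y (projStar x y) = x := by
    rw [projStar_comm x y]; exact projStar_cancel y x
  have e5 : projStar (projStar x y) y = x := by rw [projStar_comm]; exact e4
  simp only [Finset.mem_insert, Finset.mem_singleton] at ha hb
  rcases ha with rfl | rfl | rfl <;> rcases hb with rfl | rfl | rfl <;>
    first
      | exact absurd rfl hab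
      | rfl
      | (simp only [e1, e2, e3, e4, e5]; ext v;
         simp only [Finset.mem_insert, Finset.mem_singleton]; tauto)

lemma BSet_eq_blocks [Fintype V] (hcard : 3 < Fintype.card V) :
    BSet (projStar (V := V)) = blocksOf (projStar (V := V)) := by
  ext t
  constructor
  · rintro ⟨a, b, c, hab, hac, hbc, rfl⟩
    have hxy : projStar a b ≠ projStar b c := by
      intro he
      have h1 := congrArg Subtype.val he
      rw [projStar_val hab, projStar_val hbc] at h1
      rw [add_comm b.1 c.1] at h1
      exact hac (Subtype.ext (add_right_cancel h1))
    have hxz : projStar a b ≠ projStar c a := by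
      intro he
      have h1 := congrArg Subtype.val he
      rw [projStar_val hab, projStar_val (Ne.symm hac), add_comm c.1 a.1] at h1
      exact hbc (Subtype.ext (add_left_cancel h1))
    have hyz : projStar b c ≠ projStar c a := by
      intro he
      have h1 := congrArg Subtype.val he
      rw [projStar_val hbc, projStar_val (Ne.symm hac), add_comm c.1 a.1] at h1
      exact hab (Subtype.ext (add_right_cancel h1)).symm
    refine ⟨projStar a b, projStar b c, projStar c a, hxy, hxz, hyz, rfl, ?_⟩
    rw [projStar_eq_iff hxy, projStar_val hab, projStar_val hbc,
      projStar_val (Ne.symm hac), add_assoc, ← add_assoc b.1, pg_addself, zero_add,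
      add_comm]
  · intro ht
    obtain ⟨a, b, hab, rfl⟩ := mem_blocks_iff.mp ht
    -- find w outside {0, a, b}
    have : ∃ w : V, w ∉ ({0, a.1, b.1} : Finset V) := by
      by_contra hc
      push_neg at hc
      have hsub : (Finset.univ : Finset V) ⊆ {0, a.1, b.1} := fun w _ => hc w
      have h1 := Finset.card_le_card hsub
      rw [Finset.card_univ] at h1
      have h2 : ({0, a.1, b.1} : Finset V).card ≤ 3 :=
        le_trans (Finset.card_insert_le _ _)
          (by simpa using Nat.succ_le_succ (Finset.card_insert_le a.1 ({b.1} : Finset V)))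
      omega
    obtain ⟨w, hw⟩ := this
    simp only [Finset.mem_insert, Finset.mem_singleton] at hw
    push_neg at hw
    obtain ⟨hw0, hwa, hwb⟩ := hw
    have hneg : ∀ u : V, -u = u := fun u => neg_eq_of_add_eq_zero_left (pg_addself u)
    have hx0 : a.1 + w ≠ 0 := by
      intro h0
      exact hwa ((hneg w).symm.trans (neg_eq_of_add_eq_zero_left h0))
    have hz0 : b.1 + w ≠ 0 := by
      intro h0
      exact hwb ((hneg w).symm.trans (neg_eq_of_add_eq_zero_left h0))
    set x : X := ⟨a.1 + w, hx0⟩ with hxd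
    set y : X := ⟨w, hw0⟩ with hyd
    set z : X := ⟨b.1 + w, hz0⟩ with hzd
    have hxy : x ≠ y := by
      intro he
      have h1 := congrArg Subtype.val he
      simp only [hxd, hyd] at h1
      exact a.2 (by rwa [add_eq_right] at h1)
    have hyz : y ≠ z := by
      intro he
      have h1 := congrArg Subtype.val he
      simp only [hyd, hzd] at h1
      exact b.2 (by rwa [eq_comm, add_eq_right] at h1)
    have hxz : x ≠ z := by
      intro he
      have h1 := congrArg Subtype.val he
      simp only [hxd, hzd] at h1
      exact hab (Subtype.ext (add_right_cancel h1))
    refine ⟨x, y, z, hxy, hxz, hyz, ?_⟩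
    have h1 : projStar x y = a := by
      rw [projStar_eq_iff hxy]
      show a.1 + w + w = a.1
      rw [add_assoc, pg_addself, add_zero]
    have h2 : projStar y z = b := by
      rw [projStar_eq_iff hyz]
      show w + (b.1 + w) = b.1
      rw [add_comm b.1 w, ← add_assoc, pg_addself, zero_add]
    have h3 : projStar z x = projStar a b := by
      rw [projStar_eq_iff hxz.symm, projStar_val hab]
      show b.1 + w + (a.1 + w) = a.1 + b.1
      rw [add_add_add_comm, pg_addself, add_zero, add_comm]
    rw [h1, h2, h3]

lemma three_mul_beta [Fintype V] (hcard : 3 < Fintype.card V) :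
    3 * betaInv (projStar (V := V)) = (Fintype.card X).choose 2 := by
  classical
  have hfin : (blocksOf (projStar (V := V))).Finite := Set.toFinite _
  have hbeta : betaInv (projStar (V := V)) = hfin.toFinset.card := by
    rw [betaInv, BSet_eq_blocks hcard, Set.ncard_eq_toFinset_card _ hfin]
  have key : (Finset.univ : Finset X).powersetCard 2
      = hfin.toFinset.biUnion (fun t => t.powersetCard 2) := by
    ext s
    simp only [Finset.mem_powersetCard, Finset.mem_biUnion, Set.Finite.mem_toFinset]
    constructor
    · rintro ⟨-, hs2⟩
      obtain ⟨a, b, hab, rfl⟩ := Finset.card_eq_two.mp hs2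
      refine ⟨{a, b, projStar a b}, mem_blocks_iff.mpr ⟨a, b, hab, rfl⟩, ?_, hs2⟩
      intro v hv
      simp only [Finset.mem_insert, Finset.mem_singleton] at hv ⊢
      tauto
    · rintro ⟨t, _, _, hs2⟩
      exact ⟨Finset.subset_univ _, hs2⟩
  have hdisj : ∀ t1 ∈ hfin.toFinset, ∀ t2 ∈ hfin.toFinset, t1 ≠ t2 →
      Disjoint (t1.powersetCard 2) (t2.powersetCard 2) := by
    intro t1 h1 t2 h2 hne
    rw [Set.Finite.mem_toFinset] at h1 h2
    rw [Finset.disjoint_left]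
    intro s hs1 hs2
    rw [Finset.mem_powersetCard] at hs1 hs2
    obtain ⟨a, b, hab, rfl⟩ := Finset.card_eq_two.mp hs1.2
    have ha1 : a ∈ t1 := hs1.1 (by simp)
    have hb1 : b ∈ t1 := hs1.1 (by simp)
    have ha2 : a ∈ t2 := hs2.1 (by simp)
    have hb2 : b ∈ t2 := hs2.1 (by simp)
    exact hne ((block_unique h1 hab ha1 hb1).trans (block_unique h2 hab ha2 hb2).symm)
  have hsum : ∀ t ∈ hfin.toFinset, (t.powersetCard 2).card = 3 := by
    intro t ht
    rw [Finset.card_powersetCard, block_card (hfin.mem_toFinset.mp ht)]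
    rfl
  rw [hbeta, ← Finset.card_univ, ← Finset.card_powersetCard 2 Finset.univ, key,
    Finset.card_biUnion hdisj, Finset.sum_congr rfl hsum, Finset.sum_const,
    smul_eq_mul, mul_comm]

end Aux

/-- For the projective geometry `PG(k,2)` (with `k ≥ 2`), on the `n = 2^(k+1) - 1`
nonzero vectors of a `(k+1)`-dimensional `F₂`-vector space, one has
`β(S) = (1/3)·C(n,2)`, that is, `B(S) = S`. -/
theorem stmt7 {V : Type*} [AddCommGroup V] [Module (ZMod 2) V]
    [Fintype V] [DecidableEq V] (k : ℕ) (hk : 2 ≤ k)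
    (hdim : Module.finrank (ZMod 2) V = k + 1) :
    Fintype.card {v : V // v ≠ 0} = 2 ^ (k + 1) - 1 ∧
      3 * betaInv (projStar (V := V)) =
        (Fintype.card {v : V // v ≠ 0}).choose 2 ∧
      BSet (projStar (V := V)) = blocksOf (projStar (V := V)) := by
  have hV : Fintype.card V = 2 ^ (k + 1) := by
    have h := Module.card_eq_pow_finrank (K := ZMod 2) (V := V)
    rwa [ZMod.card, hdim] at h
  have hcard : 3 < Fintype.card V := by
    rw [hV]
    calc 3 < 2 ^ 3 := by norm_num
    _ ≤ 2 ^ (k + 1) := Nat.pow_le_pow_right (by norm_num) (by omega)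
  have hX : Fintype.card {v : V // v ≠ 0} = 2 ^ (k + 1) - 1 := by
    classical
    have h := Fintype.card_subtype_compl (fun v : V => v = 0)
    rw [Fintype.card_subtype_eq] at h
    rw [← hV, ← h]
  exact ⟨hX, three_mul_beta hcard, BSet_eq_blocks hcard⟩
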